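/- If X is a locally Lindelöf Hausdorff space, then |X| ≤ wL(X)^(ψ_c(X)·t(X)). -/

import Mathlib

open Cardinal Set

universe u

section Defs
variable (X : Type u) [TopologicalSpace X]

/-- An open cover of the whole space. -/
def IsOpenCover (𝒰 : Set (Set X)) : Prop := (∀ U ∈ 𝒰, IsOpen U) ∧ ⋃₀ 𝒰 = Set.univ

/-- The cellularity: supremum of cardinalities of pairwise disjoint families of nonempty
open sets, plus `ℵ₀`. -/
noncomputable def cellularity : Cardinal.{u} :=
  max ℵ₀ (⨆ 𝒰 : {𝒰 : Set (Set X) // (∀ U ∈ 𝒰, IsOpen U ∧ U.Nonempty) ∧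
    𝒰.PairwiseDisjoint id}, #𝒰.1)

/-- The weak Lindelöf degree. -/
noncomputable def wLdeg : Cardinal.{u} :=
  sInf {κ | ℵ₀ ≤ κ ∧ ∀ 𝒰 : Set (Set X), IsOpenCover X 𝒰 →
    ∃ 𝒱 ⊆ 𝒰, #𝒱 ≤ κ ∧ Dense (⋃₀ 𝒱)}

/-- The tightness. -/
noncomputable def tightness : Cardinal.{u} :=
  sInf {κ | ℵ₀ ≤ κ ∧ ∀ (A : Set X) (x : X), x ∈ closure A →
    ∃ B ⊆ A, #B ≤ κ ∧ x ∈ closure B}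

/-- The π-character. -/
noncomputable def piCharacter : Cardinal.{u} :=
  sInf {κ | ℵ₀ ≤ κ ∧ ∀ x : X, ∃ 𝒬 : Set (Set X), #𝒬 ≤ κ ∧
    (∀ P ∈ 𝒬, IsOpen P ∧ P.Nonempty) ∧
    ∀ U : Set X, IsOpen U → x ∈ U → ∃ P ∈ 𝒬, P ⊆ U}

/-- The pseudocharacter. -/
noncomputable def pseudoChar : Cardinal.{u} :=
  sInf {κ | ℵ₀ ≤ κ ∧ ∀ x : X, ∃ 𝒱 : Set (Set X), #𝒱 ≤ κ ∧
    (∀ V ∈ 𝒱, IsOpen V ∧ x ∈ V) ∧ ⋂₀ 𝒱 = {x}}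

/-- The closed pseudocharacter. -/
noncomputable def closedPseudoChar : Cardinal.{u} :=
  sInf {κ | ℵ₀ ≤ κ ∧ ∀ x : X, ∃ 𝒱 : Set (Set X), #𝒱 ≤ κ ∧
    (∀ V ∈ 𝒱, IsOpen V ∧ x ∈ V) ∧ (⋂ V ∈ 𝒱, closure V) = {x}}

/-- The density. -/
noncomputable def densityCard : Cardinal.{u} :=
  sInf {κ | ℵ₀ ≤ κ ∧ ∃ D : Set X, #D ≤ κ ∧ Dense D}

/-- The star of a set `A` with respect to a family `𝒰`. -/
def st (A : Set X) (𝒰 : Set (Set X)) : Set X := ⋃₀ {U | U ∈ 𝒰 ∧ (A ∩ U).Nonempty}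

/-- The θ-closure of a set. -/
def thetaClosure (A : Set X) : Set X :=
  {x | ∀ U : Set X, IsOpen U → x ∈ U → (closure U ∩ A).Nonempty}

/-- The θ-density. -/
noncomputable def thetaDensityCard : Cardinal.{u} :=
  sInf {κ | ℵ₀ ≤ κ ∧ ∃ D : Set X, #D ≤ κ ∧ thetaClosure X D = Set.univ}

/-- A discrete family of sets: each point has a neighborhood meeting at most one member. -/
def IsDiscreteFamily (𝒰 : Set (Set X)) : Prop :=
  ∀ x : X, ∃ V : Set X, IsOpen V ∧ x ∈ V ∧ {U | U ∈ 𝒰 ∧ (V ∩ U).Nonempty}.Subsingleton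

/-- Countable discrete cellularity. -/
def CDC : Prop :=
  ∀ 𝒰 : Set (Set X), (∀ U ∈ 𝒰, IsOpen U ∧ U.Nonempty) → IsDiscreteFamily X 𝒰 → 𝒰.Countable

/-- Star-cdc: every open cover has a cdc subspace whose star covers the space. -/
def StarCDC : Prop :=
  ∀ 𝒰 : Set (Set X), IsOpenCover X 𝒰 → ∃ Y : Set X, CDC ↥Y ∧ st X Y 𝒰 = Set.univ

/-- H-closed space: every open cover has a finite subfamily with dense union. -/
def IsHClosedSpace : Prop :=
  ∀ 𝒰 : Set (Set X), IsOpenCover X 𝒰 → ∃ 𝒱 ⊆ 𝒰, 𝒱.Finite ∧ Dense (⋃₀ 𝒱)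

/-- Countable cellularity (ccc). -/
def CCCSpace : Prop :=
  ∀ 𝒰 : Set (Set X), (∀ U ∈ 𝒰, IsOpen U ∧ U.Nonempty) → 𝒰.PairwiseDisjoint id → 𝒰.Countable

/-- Weakly Lindelöf space. -/
def WeaklyLindelof : Prop :=
  ∀ 𝒰 : Set (Set X), IsOpenCover X 𝒰 → ∃ 𝒱 ⊆ 𝒰, 𝒱.Countable ∧ Dense (⋃₀ 𝒱)

/-- Almost Lindelöf space. -/
def AlmostLindelof : Prop :=
  ∀ 𝒰 : Set (Set X), IsOpenCover X 𝒰 → ∃ 𝒱 ⊆ 𝒰, 𝒱.Countable ∧ (⋃ V ∈ 𝒱, closure V) = Set.univ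

/-- A π-base: a family of nonempty open sets such that every nonempty open set contains one. -/
def IsPiBase (ℬ : Set (Set X)) : Prop :=
  (∀ B ∈ ℬ, IsOpen B ∧ B.Nonempty) ∧
  ∀ U : Set X, IsOpen U → U.Nonempty → ∃ B ∈ ℬ, B ⊆ U

/-- Power homogeneous: some power of `X` is homogeneous. -/
def PowerHomogeneous : Prop :=
  ∃ ι : Type u, ∀ x y : ι → X, ∃ h : (ι → X) ≃ₜ (ι → X), h x = y

/-- A strong `G_δ`-diagonal of rank 2. -/
def HasStrongRank2Diagonal : Prop :=
  ∃ 𝒰 : ℕ → Set (Set X), (∀ n, IsOpenCover X (𝒰 n)) ∧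
    ∀ x : X, (⋂ n, closure (st X (st X {x} (𝒰 n)) (𝒰 n))) = {x}

/-- A `G_δ`-diagonal of rank 2. -/
def HasRank2Diagonal : Prop :=
  ∃ 𝒰 : ℕ → Set (Set X), (∀ n, IsOpenCover X (𝒰 n)) ∧
    ∀ x : X, (⋂ n, st X (st X {x} (𝒰 n)) (𝒰 n)) = {x}

/-- A `G_δ`-diagonal of rank 3. -/
def HasRank3Diagonal : Prop :=
  ∃ 𝒰 : ℕ → Set (Set X), (∀ n, IsOpenCover X (𝒰 n)) ∧
    ∀ x : X, (⋂ n, st X (st X (st X {x} (𝒰 n)) (𝒰 n)) (𝒰 n)) = {x}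

/-- Basically disconnected: the closure of every cozero set is open. -/
def BasicallyDisconnected : Prop :=
  ∀ f : C(X, ℝ), IsOpen (closure {x | f x ≠ 0})

end Defs


lemma closure_card_le {X : Type u} [TopologicalSpace X] {κ : Cardinal.{u}} (hκ : ℵ₀ ≤ κ)
    (𝒱 : X → Set (Set X))
    (h𝒱 : ∀ x, #(𝒱 x) ≤ κ ∧ (∀ V ∈ 𝒱 x, IsOpen V ∧ x ∈ V) ∧ (⋂ V ∈ 𝒱 x, closure V) = {x})
    (ht : ∀ (A : Set X) (x : X), x ∈ closure A → ∃ B ⊆ A, #B ≤ κ ∧ x ∈ closure B)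
    (B : Set X) : #(closure B) ≤ (max ℵ₀ #B) ^ κ := by
  set M : Cardinal.{u} := max ℵ₀ #B with hM
  have hMinf : ℵ₀ ≤ M := le_max_left _ _
  have key : ∀ x ∈ closure B, ∀ V ∈ 𝒱 x,
      ∃ C : Set X, (C ⊆ B ∧ #C ≤ κ) ∧ x ∈ closure C ∧ C ⊆ V := by
    intro x hx V hV
    obtain ⟨hVo, hxV⟩ := (h𝒱 x).2.1 V hV
    have hx' : x ∈ closure (V ∩ B) := by
      rw [mem_closure_iff] at hx ⊢
      intro O hO hxO
      obtain ⟨z, hz⟩ := hx (O ∩ V) (hO.inter hVo) ⟨hxO, hxV⟩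
      exact ⟨z, hz.1.1, hz.1.2, hz.2⟩
    obtain ⟨C, hCB, hCκ, hxC⟩ := ht (V ∩ B) x hx'
    exact ⟨C, ⟨fun c hc => (hCB hc).2, hCκ⟩, hxC, fun c hc => (hCB hc).1⟩
  choose g hg using key
  set T : Set (Set X) := {C | C ⊆ B ∧ #C ≤ κ} with hT
  have Φprop : ∀ x : closure B, (Set.range (fun V : (𝒱 x.1) => g x.1 x.2 V.1 V.2)) ⊆ T ∧
      #(Set.range (fun V : (𝒱 x.1) => g x.1 x.2 V.1 V.2)) ≤ κ := by
    intro x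
    constructor
    · rintro _ ⟨V, rfl⟩
      exact (hg x.1 x.2 V.1 V.2).1
    · exact mk_range_le.trans (h𝒱 x.1).1
  set Φ : closure B → {t : Set (Set X) // t ⊆ T ∧ #t ≤ κ} :=
    fun x => ⟨_, Φprop x⟩ with hΦ
  have hinj : Function.Injective Φ := by
    intro x y hxy
    have hxy' : (Set.range (fun V : (𝒱 x.1) => g x.1 x.2 V.1 V.2)) =
        (Set.range (fun V : (𝒱 y.1) => g y.1 y.2 V.1 V.2)) := congrArg Subtype.val hxy
    have hsub : (y : X) ∈ ⋂ V ∈ 𝒱 x.1, closure V := by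
      rw [mem_iInter₂]
      intro V hV
      have hmem : g x.1 x.2 V hV ∈ Set.range (fun V : (𝒱 y.1) => g y.1 y.2 V.1 V.2) := by
        rw [← hxy']; exact ⟨⟨V, hV⟩, rfl⟩
      obtain ⟨V', hV'⟩ := hmem
      replace hV' : g y.1 y.2 V'.1 V'.2 = g x.1 x.2 V hV := hV'
      have hy : (y : X) ∈ closure (g y.1 y.2 V'.1 V'.2) := (hg y.1 y.2 V'.1 V'.2).2.1
      rw [hV'] at hy
      exact closure_mono (hg x.1 x.2 V hV).2.2 hy
    rw [(h𝒱 x.1).2.2] at hsub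
    exact Subtype.ext hsub.symm
  have h1 : #(closure B) ≤ #{t : Set (Set X) // t ⊆ T ∧ #t ≤ κ} := mk_le_of_injective hinj
  have h2 : #{t : Set (Set X) // t ⊆ T ∧ #t ≤ κ} ≤ max #T ℵ₀ ^ κ := mk_bounded_subset_le T κ
  have hTle : #T ≤ M ^ κ := by
    have h3 : #{t : Set X // t ⊆ B ∧ #t ≤ κ} ≤ max #B ℵ₀ ^ κ := mk_bounded_subset_le B κ
    rw [max_comm] at h3
    exact h3
  have hMκ : ℵ₀ ≤ M ^ κ := hMinf.trans (self_le_power M (one_le_aleph0.trans hκ))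
  calc #(closure B) ≤ max #T ℵ₀ ^ κ := h1.trans h2
    _ ≤ (M ^ κ) ^ κ := power_le_power_right (max_le hTle hMκ)
    _ = M ^ (κ * κ) := power_mul.symm
    _ = M ^ κ := by rw [mul_eq_self hκ]

section Chain

variable {X : Type u} [TopologicalSpace X] [Nonempty X]

open Classical in
noncomputable def pickPt (K : Set X) (𝒲 : Set (Set X)) : X :=
  if h : (K \ ⋃₀ 𝒲).Nonempty then h.choose else Classical.arbitrary X

lemma pickPt_mem {K : Set X} {𝒲 : Set (Set X)} (h : (K \ ⋃₀ 𝒲).Nonempty) :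
    pickPt K 𝒲 ∈ K \ ⋃₀ 𝒲 := by
  rw [pickPt, dif_pos h]
  exact h.choose_spec

def clfam (𝒱 : X → Set (Set X)) (S : Set X) : Set (Set X) := ⋃ y ∈ S, closure '' 𝒱 y

noncomputable def stepSet (𝒱 : X → Set (Set X)) (κ : Cardinal.{u}) (K S : Set X) : Set X :=
  S ∪ (⋃ C ∈ {C : Set X | C ⊆ S ∧ #C ≤ κ}, closure C ∩ K) ∪
    pickPt K '' {𝒲 : Set (Set X) | 𝒲 ⊆ clfam 𝒱 S ∧ #𝒲 ≤ κ ∧ (K \ ⋃₀ 𝒲).Nonempty}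

noncomputable def chainSet (𝒱 : X → Set (Set X)) (κ : Cardinal.{u}) (K : Set X) :
    (Order.succ κ).ord.ToType → Set X := fun w =>
  stepSet 𝒱 κ K (⋃ v : {v // v < w}, chainSet 𝒱 κ K v.1)
termination_by w => w
decreasing_by exact v.2

lemma chainSet_eq (𝒱 : X → Set (Set X)) (κ : Cardinal.{u}) (K : Set X)
    (w : (Order.succ κ).ord.ToType) :
    chainSet 𝒱 κ K w = stepSet 𝒱 κ K (⋃ v : {v // v < w}, chainSet 𝒱 κ K v.1) := by
  rw [chainSet]

lemma subset_stepSet (𝒱 : X → Set (Set X)) (κ : Cardinal.{u}) (K S : Set X) :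
    S ⊆ stepSet 𝒱 κ K S :=
  subset_union_left.trans subset_union_left

lemma chainSet_mono (𝒱 : X → Set (Set X)) (κ : Cardinal.{u}) (K : Set X)
    {v w : (Order.succ κ).ord.ToType} (hvw : v ≤ w) :
    chainSet 𝒱 κ K v ⊆ chainSet 𝒱 κ K w := by
  rcases eq_or_lt_of_le hvw with rfl | hlt
  · exact le_refl _
  · rw [chainSet_eq 𝒱 κ K w]
    exact le_trans (subset_iUnion (fun u : {u // u < w} => chainSet 𝒱 κ K u.1) ⟨v, hlt⟩)
      (subset_stepSet _ _ _ _)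

lemma stepSet_subset_K (𝒱 : X → Set (Set X)) (κ : Cardinal.{u}) {K S : Set X} (hSK : S ⊆ K) :
    stepSet 𝒱 κ K S ⊆ K := by
  apply union_subset (union_subset hSK ?_) ?_
  · exact iUnion₂_subset fun C _ => inter_subset_right
  · rintro _ ⟨𝒲, h𝒲, rfl⟩
    exact (pickPt_mem h𝒲.2.2).1

lemma chainSet_subset_K (𝒱 : X → Set (Set X)) (κ : Cardinal.{u}) {K : Set X}
    (w : (Order.succ κ).ord.ToType) : chainSet 𝒱 κ K w ⊆ K := by
  induction w using WellFoundedLT.induction with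
  | ind w ih =>
    rw [chainSet_eq]
    exact stepSet_subset_K 𝒱 κ (iUnion_subset fun v => ih v.1 v.2)

lemma iSup_le_card {ι : Type v} {f : ι → Cardinal.{u}} {c : Cardinal.{u}}
    (h : ∀ i, f i ≤ c) : iSup f ≤ c :=
  csSup_le' (by rintro _ ⟨i, rfl⟩; exact h i)

lemma stepSet_card {𝒱 : X → Set (Set X)} {κ : Cardinal.{u}} (hκ : ℵ₀ ≤ κ)
    (h𝒱 : ∀ x, #(𝒱 x) ≤ κ ∧ (∀ V ∈ 𝒱 x, IsOpen V ∧ x ∈ V) ∧ (⋂ V ∈ 𝒱 x, closure V) = {x})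
    (ht : ∀ (A : Set X) (x : X), x ∈ closure A → ∃ B ⊆ A, #B ≤ κ ∧ x ∈ closure B)
    (K : Set X) {S : Set X} (hS : #S ≤ 2 ^ κ) : #(stepSet 𝒱 κ K S) ≤ 2 ^ κ := by
  have h2κ : ℵ₀ ≤ (2:Cardinal.{u}) ^ κ := hκ.trans (cantor κ).le
  have hppow : ((2:Cardinal.{u}) ^ κ) ^ κ = 2 ^ κ := by rw [← power_mul, mul_eq_self hκ]
  have hmul : (2:Cardinal.{u}) ^ κ * 2 ^ κ = 2 ^ κ := mul_eq_self h2κ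
  have part2 : #(⋃ C ∈ {C : Set X | C ⊆ S ∧ #C ≤ κ}, closure C ∩ K) ≤ 2 ^ κ := by
    refine le_trans (mk_biUnion_le _ _) ?_
    have hc : #{C : Set X | C ⊆ S ∧ #C ≤ κ} ≤ 2 ^ κ := by
      refine le_trans (mk_bounded_subset_le S κ) ?_
      rw [← hppow]
      exact power_le_power_right (max_le hS h2κ)
    have hsup : (⨆ C : ↥{C : Set X | C ⊆ S ∧ #C ≤ κ}, #↥(closure C.1 ∩ K)) ≤ 2 ^ κ := by
      refine iSup_le_card fun C => ?_
      refine le_trans (mk_le_mk_of_subset inter_subset_left) ?_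
      refine le_trans (closure_card_le hκ 𝒱 h𝒱 ht C.1) ?_
      rw [← power_self_eq hκ]
      exact power_le_power_right (max_le hκ C.2.2)
    exact le_trans (mul_le_mul' hc hsup) hmul.le
  have part3 : #(pickPt K '' {𝒲 : Set (Set X) | 𝒲 ⊆ clfam 𝒱 S ∧ #𝒲 ≤ κ ∧
      (K \ ⋃₀ 𝒲).Nonempty}) ≤ 2 ^ κ := by
    refine le_trans mk_image_le ?_
    refine le_trans (mk_le_mk_of_subset (fun 𝒲 h => ⟨h.1, h.2.1⟩ :
      {𝒲 : Set (Set X) | 𝒲 ⊆ clfam 𝒱 S ∧ #𝒲 ≤ κ ∧ (K \ ⋃₀ 𝒲).Nonempty} ⊆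
      {𝒲 : Set (Set X) | 𝒲 ⊆ clfam 𝒱 S ∧ #𝒲 ≤ κ})) ?_
    refine le_trans (mk_bounded_subset_le (clfam 𝒱 S) κ) ?_
    have hcl : #(clfam 𝒱 S) ≤ 2 ^ κ := by
      refine le_trans (mk_biUnion_le _ _) ?_
      refine le_trans (mul_le_mul' hS (iSup_le_card fun y => le_trans mk_image_le (h𝒱 y.1).1))
        ?_
      exact le_trans (mul_le_mul' (le_refl _) ((cantor κ).le)) hmul.le
    rw [← hppow]
    exact power_le_power_right (max_le hcl h2κ)
  rw [stepSet]
  refine le_trans (mk_union_le _ _) (le_trans (add_le_add (le_trans (mk_union_le _ _)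
    (le_trans (add_le_add hS part2) (add_eq_self h2κ).le)) part3) (add_eq_self h2κ).le)

lemma chainSet_card {𝒱 : X → Set (Set X)} {κ : Cardinal.{u}} (hκ : ℵ₀ ≤ κ)
    (h𝒱 : ∀ x, #(𝒱 x) ≤ κ ∧ (∀ V ∈ 𝒱 x, IsOpen V ∧ x ∈ V) ∧ (⋂ V ∈ 𝒱 x, closure V) = {x})
    (ht : ∀ (A : Set X) (x : X), x ∈ closure A → ∃ B ⊆ A, #B ≤ κ ∧ x ∈ closure B)
    (K : Set X) (w : (Order.succ κ).ord.ToType) : #(chainSet 𝒱 κ K w) ≤ 2 ^ κ := by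
  have h2κ : ℵ₀ ≤ (2:Cardinal.{u}) ^ κ := hκ.trans (cantor κ).le
  induction w using WellFoundedLT.induction with
  | ind w ih =>
    rw [chainSet_eq]
    apply stepSet_card hκ h𝒱 ht K
    refine le_trans (mk_iUnion_le _) ?_
    have h1 : #{v : (Order.succ κ).ord.ToType // v < w} ≤ κ :=
      Order.lt_succ_iff.mp (mk_Iio_ord_toType w)
    refine le_trans (mul_le_mul' (h1.trans (cantor κ).le)
      (iSup_le_card fun v => ih v.1 v.2)) (mul_eq_self h2κ).le

end Chain

lemma lindelof_card_le {X : Type u} [TopologicalSpace X] {κ : Cardinal.{u}} (hκ : ℵ₀ ≤ κ)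
    (𝒱 : X → Set (Set X))
    (h𝒱 : ∀ x, #(𝒱 x) ≤ κ ∧ (∀ V ∈ 𝒱 x, IsOpen V ∧ x ∈ V) ∧ (⋂ V ∈ 𝒱 x, closure V) = {x})
    (ht : ∀ (A : Set X) (x : X), x ∈ closure A → ∃ B ⊆ A, #B ≤ κ ∧ x ∈ closure B)
    {K : Set X} (hK : IsLindelof K) : #K ≤ 2 ^ κ := by
  rcases isEmpty_or_nonempty X with hX | hX
  · rw [Cardinal.mk_eq_zero]; exact zero_le
  have h2κ : ℵ₀ ≤ (2:Cardinal.{u}) ^ κ := hκ.trans (cantor κ).le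
  haveI : NoMaxOrder (Order.succ κ).ord.ToType :=
    Cardinal.noMaxOrder (hκ.trans (Order.le_succ κ))
  set ch := chainSet 𝒱 κ K with hch
  set H : Set X := ⋃ w : (Order.succ κ).ord.ToType, ch w with hH
  have hHK : H ⊆ K := iUnion_subset fun w => chainSet_subset_K 𝒱 κ w
  have hcard : #H ≤ 2 ^ κ := by
    refine le_trans (mk_iUnion_le _) ?_
    have hW : #((Order.succ κ).ord.ToType) = Order.succ κ := by
      rw [Cardinal.mk_toType, Cardinal.card_ord]
    rw [hW]
    exact le_trans (mul_le_mul' (Order.succ_le_of_lt (cantor κ))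
      (iSup_le_card fun w => chainSet_card hκ h𝒱 ht K w)) (mul_eq_self h2κ).le
  have hbdd : ∀ s : Set X, s ⊆ H → #s ≤ κ → ∃ w, s ⊆ ch w := by
    haveI : IsWellOrder (Order.succ κ).ord.ToType (· < ·) := isWellOrder_lt
    intro s hsH hsκ
    have hmem : ∀ y : ↥s, ∃ w, (y : X) ∈ ch w := fun y => mem_iUnion.mp (hsH y.2)
    choose f hf using hmem
    have hcof : #↥s < ((Order.succ κ).ord).cof := by
      rw [(Cardinal.isRegular_succ hκ).cof_eq]
      exact hsκ.trans_lt (Order.lt_succ κ)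
    have hsup : (⨆ y : ↥s, Ordinal.typein (α := (Order.succ κ).ord.ToType) (· < ·) (f y)) <
        (Order.succ κ).ord :=
      Ordinal.iSup_lt_ord hcof fun y => Ordinal.typein_lt_self (f y)
    refine ⟨Ordinal.enum (α := (Order.succ κ).ord.ToType) (· < ·)
      ⟨_, by rw [Ordinal.type_toType]; exact hsup⟩, fun y hy => ?_⟩
    have h1 : Ordinal.typein (α := (Order.succ κ).ord.ToType) (· < ·) (f ⟨y, hy⟩) ≤
        ⨆ y : ↥s, Ordinal.typein (α := (Order.succ κ).ord.ToType) (· < ·) (f y) :=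
      le_ciSup (Ordinal.bddAbove_range _) (⟨y, hy⟩ : ↥s)
    have h2 : f ⟨y, hy⟩ ≤ Ordinal.enum (α := (Order.succ κ).ord.ToType) (· < ·)
        ⟨_, by rw [Ordinal.type_toType]; exact hsup⟩ := by
      rw [← Ordinal.typein_le_typein' ((Order.succ κ).ord)]
      exact h1.trans (le_of_eq (Ordinal.typein_enum _ _).symm)
    exact chainSet_mono 𝒱 κ K h2 (hf ⟨y, hy⟩)
  have hclosed : closure H ∩ K ⊆ H := by
    rintro x ⟨hxcl, hxK⟩
    obtain ⟨B, hBH, hBκ, hxB⟩ := ht H x hxcl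
    obtain ⟨w, hw⟩ := hbdd B hBH hBκ
    obtain ⟨w', hww'⟩ := exists_gt w
    refine mem_iUnion.mpr ⟨w', ?_⟩
    rw [hch, chainSet_eq]
    refine mem_union_left _ (mem_union_right _ ?_)
    have hBU' : B ⊆ ⋃ v : {v // v < w'}, chainSet 𝒱 κ K v.1 :=
      hw.trans (subset_iUnion (fun v : {v // v < w'} => chainSet 𝒱 κ K v.1) ⟨w, hww'⟩)
    exact mem_biUnion ⟨hBU', hBκ⟩ ⟨hxB, hxK⟩
  have hHeq : H = K ∩ closure H :=
    Subset.antisymm (subset_inter hHK subset_closure)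
      (fun x hx => hclosed ⟨hx.2, hx.1⟩)
  have hHlin : IsLindelof H := by rw [hHeq]; exact hK.inter_right isClosed_closure
  have hKH : K ⊆ H := by
    by_contra hc
    obtain ⟨q, hqK, hqH⟩ := not_subset.mp hc
    have hsel : ∀ y : ↥H, ∃ V ∈ 𝒱 y.1, q ∉ closure V := by
      intro y
      by_contra hcon
      push_neg at hcon
      have hq : q ∈ ⋂ V ∈ 𝒱 y.1, closure V := mem_iInter₂.mpr hcon
      rw [(h𝒱 y.1).2.2] at hq
      rw [mem_singleton_iff] at hq
      exact hqH (hq ▸ y.2)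
    choose f hf1 hf2 using hsel
    have hcover : H ⊆ ⋃ y : ↥H, f y := fun x hx =>
      mem_iUnion.mpr ⟨⟨x, hx⟩, ((h𝒱 x).2.1 _ (hf1 ⟨x, hx⟩)).2⟩
    obtain ⟨r, hrc, hrcov⟩ := hHlin.elim_countable_subcover f
      (fun y => ((h𝒱 y.1).2.1 _ (hf1 y)).1) hcover
    have hsH : (Subtype.val '' r) ⊆ H := by rintro _ ⟨y, _, rfl⟩; exact y.2
    have hsκ : #(Subtype.val '' r) ≤ κ :=
      le_trans (mk_le_aleph0_iff.mpr (hrc.image _).to_subtype) hκ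
    obtain ⟨w, hw⟩ := hbdd _ hsH hsκ
    obtain ⟨w', hww'⟩ := exists_gt w
    set 𝒲 : Set (Set X) := (fun y : ↥H => closure (f y)) '' r with h𝒲
    have h𝒲1 : 𝒲 ⊆ clfam 𝒱 (⋃ v : {v // v < w'}, chainSet 𝒱 κ K v.1) := by
      rintro _ ⟨y, hyr, rfl⟩
      refine mem_biUnion ?_ ⟨f y, hf1 y, rfl⟩
      exact mem_iUnion.mpr ⟨⟨w, hww'⟩, hw ⟨y, hyr, rfl⟩⟩
    have h𝒲2 : #𝒲 ≤ κ := le_trans (mk_le_aleph0_iff.mpr (hrc.image _).to_subtype) hκ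
    have h𝒲3 : (K \ ⋃₀ 𝒲).Nonempty := by
      refine ⟨q, hqK, ?_⟩
      rintro ⟨_, ⟨y, hyr, rfl⟩, hqV⟩
      exact hf2 y hqV
    have hz : pickPt K 𝒲 ∈ ch w' := by
      rw [hch, chainSet_eq]
      exact mem_union_right _ ⟨𝒲, ⟨h𝒲1, h𝒲2, h𝒲3⟩, rfl⟩
    have hzH : pickPt K 𝒲 ∈ H := mem_iUnion.mpr ⟨w', hz⟩
    have hzcov := hrcov hzH
    rw [mem_iUnion₂] at hzcov
    obtain ⟨y, hyr, hyV⟩ := hzcov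
    exact (pickPt_mem h𝒲3).2 ⟨closure (f y), ⟨y, hyr, rfl⟩, subset_closure hyV⟩
  exact le_trans (mk_le_mk_of_subset hKH) hcard

theorem stmt13 (X : Type u) [TopologicalSpace X] [T2Space X]
    (h : ∀ x : X, ∃ K ∈ nhds x, IsLindelof K) :
    #X ≤ wLdeg X ^ (closedPseudoChar X * tightness X) := by
  rcases isEmpty_or_nonempty X with hX | hX
  · rw [Cardinal.mk_eq_zero]; exact zero_le
  have hψmem : closedPseudoChar X ∈ {κ : Cardinal.{u} | ℵ₀ ≤ κ ∧ ∀ x : X,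
      ∃ 𝒱 : Set (Set X), #𝒱 ≤ κ ∧ (∀ V ∈ 𝒱, IsOpen V ∧ x ∈ V) ∧
      (⋂ V ∈ 𝒱, closure V) = {x}} := by
    unfold closedPseudoChar
    refine csInf_mem ⟨max ℵ₀ #(Set X), le_max_left _ _, fun x => ?_⟩
    refine ⟨{V : Set X | IsOpen V ∧ x ∈ V}, (mk_set_le _).trans (le_max_right _ _),
      fun V hV => hV, ?_⟩
    apply Subset.antisymm
    · intro y hy
      rw [mem_singleton_iff]
      by_contra hne
      obtain ⟨U, W, hU, hW, hxU, hyW, hUW⟩ := t2_separation (Ne.symm hne)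
      have hyc : y ∈ closure U := mem_iInter₂.mp hy U ⟨hU, hxU⟩
      rw [mem_closure_iff] at hyc
      obtain ⟨z, hzW, hzU⟩ := hyc W hW hyW
      exact hUW.ne_of_mem hzU hzW rfl
    · intro y hy
      rw [mem_singleton_iff] at hy
      subst hy
      exact mem_iInter₂.mpr fun V hV => subset_closure hV.2
  have htmem : tightness X ∈ {κ : Cardinal.{u} | ℵ₀ ≤ κ ∧ ∀ (A : Set X) (x : X),
      x ∈ closure A → ∃ B ⊆ A, #B ≤ κ ∧ x ∈ closure B} := by
    unfold tightness
    exact csInf_mem ⟨max ℵ₀ #X, le_max_left _ _, fun A x hx =>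
      ⟨A, Subset.rfl, (mk_set_le A).trans (le_max_right _ _), hx⟩⟩
  have hwmem : wLdeg X ∈ {κ : Cardinal.{u} | ℵ₀ ≤ κ ∧ ∀ 𝒰 : Set (Set X), IsOpenCover X 𝒰 →
      ∃ 𝒱 ⊆ 𝒰, #𝒱 ≤ κ ∧ Dense (⋃₀ 𝒱)} := by
    unfold wLdeg
    exact csInf_mem ⟨max ℵ₀ #(Set X), le_max_left _ _, fun 𝒰 hcov =>
      ⟨𝒰, Subset.rfl, (mk_set_le 𝒰).trans (le_max_right _ _), hcov.2 ▸ dense_univ⟩⟩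
  obtain ⟨hψ0, hψ⟩ := hψmem
  obtain ⟨ht0, htt⟩ := htmem
  obtain ⟨hw0, hwL⟩ := hwmem
  set κ : Cardinal.{u} := closedPseudoChar X * tightness X with hκdef
  have hψκ : closedPseudoChar X ≤ κ :=
    le_mul_of_one_le_right (zero_le) (one_le_aleph0.trans ht0)
  have htκ : tightness X ≤ κ :=
    le_mul_of_one_le_left (zero_le) (one_le_aleph0.trans hψ0)
  have hκ : ℵ₀ ≤ κ := hψ0.trans hψκ
  choose 𝒱 h1 h2 h3 using hψ
  have h𝒱 : ∀ x, #(𝒱 x) ≤ κ ∧ (∀ V ∈ 𝒱 x, IsOpen V ∧ x ∈ V) ∧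
      (⋂ V ∈ 𝒱 x, closure V) = {x} := fun x => ⟨(h1 x).trans hψκ, h2 x, h3 x⟩
  have htprop : ∀ (A : Set X) (x : X), x ∈ closure A →
      ∃ B ⊆ A, #B ≤ κ ∧ x ∈ closure B := by
    intro A x hx
    obtain ⟨B, hBA, hBt, hxB⟩ := htt A x hx
    exact ⟨B, hBA, hBt.trans htκ, hxB⟩
  choose Kn hKn hKl using h
  have hcov : IsOpenCover X (range (fun x => interior (Kn x))) := by
    constructor
    · rintro _ ⟨x, rfl⟩; exact isOpen_interior
    · refine eq_univ_iff_forall.mpr fun z => ?_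
      exact ⟨interior (Kn z), ⟨z, rfl⟩, mem_interior_iff_mem_nhds.mpr (hKn z)⟩
  obtain ⟨𝒱c, h𝒱c𝒰, h𝒱cκ, h𝒱cd⟩ := hwL _ hcov
  have hμκ : ℵ₀ ≤ wLdeg X ^ κ := hw0.trans (self_le_power _ (one_le_aleph0.trans hκ))
  have hDle : #(⋃₀ 𝒱c) ≤ wLdeg X ^ κ := by
    refine le_trans (mk_sUnion_le 𝒱c) ?_
    have hsup : (⨆ s : ↥𝒱c, #↥s.1) ≤ wLdeg X ^ κ := by
      refine iSup_le_card fun s => ?_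
      obtain ⟨x, hx⟩ := h𝒱c𝒰 s.2
      have hsub : (s.1 : Set X) ⊆ Kn x := by rw [← hx]; exact interior_subset
      refine le_trans (mk_le_mk_of_subset hsub) ?_
      refine le_trans (lindelof_card_le hκ 𝒱 h𝒱 htprop (hKl x)) ?_
      exact power_le_power_right ((nat_lt_aleph0 2).le.trans hw0)
    refine le_trans (mul_le_mul' (h𝒱cκ.trans (self_le_power _ (one_le_aleph0.trans hκ)))
      hsup) (mul_eq_self hμκ).le
  have hdense : closure (⋃₀ 𝒱c) = Set.univ := h𝒱cd.closure_eq
  have hfin := closure_card_le hκ 𝒱 h𝒱 htprop (⋃₀ 𝒱c)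
  rw [hdense] at hfin
  have hX2 : #X ≤ (wLdeg X ^ κ) ^ κ := by
    rw [← mk_univ (α := X)]
    refine le_trans hfin (power_le_power_right (max_le (hw0.trans
      (self_le_power _ (one_le_aleph0.trans hκ))) hDle))
  calc #X ≤ (wLdeg X ^ κ) ^ κ := hX2
    _ = wLdeg X ^ (κ * κ) := power_mul.symm
    _ = wLdeg X ^ κ := by rw [mul_eq_self hκ]
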